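/- Let n ≥ 2 be a natural number and define C₁ : (0,1/2) → ℝ by C₁(w) = (10w+3)/(30·w·(1−2w)) + 1/(6w) + (n−1)/(10w). Then w* = (3n + 5 − 2√(6n+10))/(6(n−1)) lies in (0,1/2) and is the unique minimizer of C₁ on (0,1/2); that is, C₁(w*) < C₁(w) for every w ∈ (0,1/2) with w ≠ w*. -/

import Mathlib

/-- Quadratic regression, Case 1: unique minimizer of
C₁(w) = (10w+3)/(30w(1-2w)) + 1/(6w) + (n-1)/(10w) on (0,1/2). -/
theorem stmt_6 (n : ℕ) (hn : 2 ≤ n) :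
    (3*(n:ℝ) + 5 - 2 * Real.sqrt (6*(n:ℝ) + 10)) / (6 * ((n:ℝ) - 1)) ∈
        Set.Ioo (0:ℝ) (1/2) ∧
    ∀ w ∈ Set.Ioo (0:ℝ) (1/2),
      w ≠ (3*(n:ℝ) + 5 - 2 * Real.sqrt (6*(n:ℝ) + 10)) / (6 * ((n:ℝ) - 1)) →
      (fun w : ℝ => (10*w + 3) / (30 * w * (1 - 2*w)) + 1 / (6*w) + ((n:ℝ) - 1) / (10*w))
          ((3*(n:ℝ) + 5 - 2 * Real.sqrt (6*(n:ℝ) + 10)) / (6 * ((n:ℝ) - 1))) <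
        (fun w : ℝ => (10*w + 3) / (30 * w * (1 - 2*w)) + 1 / (6*w) + ((n:ℝ) - 1) / (10*w)) w := by
  have hN : (2:ℝ) ≤ (n:ℝ) := by exact_mod_cast hn
  set N : ℝ := (n:ℝ) with hNdef
  set s : ℝ := Real.sqrt (6*N + 10) with hsdef
  have hs2 : s^2 = 6*N + 10 := Real.sq_sqrt (by nlinarith)
  have hs0 : 0 ≤ s := Real.sqrt_nonneg _
  have hs4 : 4 < s := by nlinarith
  have hb : (0:ℝ) < 6*(N-1) := by nlinarith
  set u : ℝ := (3*N + 5 - 2*s) / (6*(N-1)) with hudef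
  have hbu : 6*(N-1) * u = 3*N + 5 - 2*s := by
    rw [hudef]; exact mul_div_cancel₀ _ (ne_of_gt hb)
  have hnum : 0 < 3*N + 5 - 2*s := by nlinarith
  have hu0 : 0 < u := div_pos hnum hb
  have hu2 : u < 1/2 := by
    rw [hudef, div_lt_iff₀ hb]; nlinarith
  have hval : 3*N + 5 - 6*(N-1)*u = 2*s := by linarith [hbu]
  have hstat : 2*(6*(N-1))*u^2 - 4*(3*N+5)*u + (3*N+5) = 0 := by
    have h1 : 6*(N-1) * (2*(6*(N-1))*u^2 - 4*(3*N+5)*u + (3*N+5)) = 0 := by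
      linear_combination (2*(6*(N-1)*u) - 2*(3*N+5) - 4*s) * hbu + 8 * hs2
    rcases mul_eq_zero.1 h1 with h | h
    · exact absurd h (ne_of_gt hb)
    · exact h
  have hC : ∀ v : ℝ, 0 < v → v < 1/2 →
      (10*v + 3) / (30 * v * (1 - 2*v)) + 1 / (6*v) + (N - 1) / (10*v)
        = (3*N + 5 - 6*(N-1)*v) / (30 * v * (1 - 2*v)) := by
    intro v hv1 hv2
    have h1 : v ≠ 0 := ne_of_gt hv1
    have h2 : 1 - 2*v ≠ 0 := by intro h; nlinarith
    rw [div_add_div _ _ (by positivity) (by positivity), div_add_div _ _ (by positivity) (by positivity), div_eq_div_iff (by positivity) (by positivity)]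
    ring
  constructor
  · exact ⟨hu0, hu2⟩
  · intro w hw hwne
    simp only
    rw [hC u hu0 hu2, hC w hw.1 hw.2]
    have hwu : w ≠ u := hwne
    have hDw : 0 < 30 * w * (1 - 2*w) := by nlinarith [hw.1, hw.2]
    have hDu : 0 < 30 * u * (1 - 2*u) := by nlinarith
    rw [div_lt_div_iff₀ hDu hDw]
    have key : (3*N + 5 - 6*(N-1)*w) * (30 * u * (1 - 2*u))
        - (3*N + 5 - 6*(N-1)*u) * (30 * w * (1 - 2*w)) = 120*s*(w-u)^2 := by
      linear_combination (30*(u-w)) * hstat + (60*(u-w)^2) * hval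
    have hsq : 0 < (w-u)^2 := by
      have h0 : w - u ≠ 0 := sub_ne_zero.2 hwu
      positivity
    nlinarith [mul_pos (mul_pos (by linarith : (0:ℝ) < 120) (by linarith : (0:ℝ) < s)) hsq]
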